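/- arXiv:2208.05333 — 3 statements merged into one kernel-verified Lean document; each statement's English description precedes it below -/
import Mathlib

section
/- High-temperature series expansion of the Ising partition function in an external field (equation (32) with explicit constants): let V and E be finite types, s, t : E → V with s e ≠ t e for all e, J : E → ℝ, and H ∈ ℝ. Then Σ_{σ : V → {−1,1}} exp( Σ_{e∈E} J(e)·σ(s e)·σ(t e) + H·Σ_{v∈V} σ(v) ) = 2^{|V|} · (cosh H)^{|V|} · (Π_{e∈E} cosh(J(e))) · Σ_{U ⊆ E} (tanh H)^{|odd(U)|} · Π_{e∈U} tanh(J(e)), where the sum ranges over all finite subsets U of E and odd(U) = { v ∈ V : the number of e ∈ U with s e = v or t e = v is odd }. -/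
open scoped BigOperators

open Finset

lemma ising_sum_units_pow (n : ℕ) : ∑ u : ℤˣ, ((u:ℤ):ℝ)^n = if Even n then 2 else 0 := by
  have h : (Finset.univ : Finset ℤˣ) = {1, -1} := by decide
  rw [h, Finset.sum_insert (by decide), Finset.sum_singleton]
  rcases Nat.even_or_odd n with he | ho
  · norm_num [he, he.neg_one_pow]
  · norm_num [Nat.not_even_iff_odd.mpr ho, ho.neg_one_pow]

lemma ising_sum_sigma {V : Type*} [Fintype V] [DecidableEq V] (n : V → ℕ) :
    ∑ σ : V → ℤˣ, ∏ v, ((σ v : ℤ):ℝ)^(n v)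
      = if (∀ v, Even (n v)) then (2:ℝ) ^ Fintype.card V else 0 := by
  have h1 : ∑ σ : V → ℤˣ, ∏ v, ((σ v : ℤ):ℝ)^(n v)
      = ∏ v : V, ∑ u : ℤˣ, ((u:ℤ):ℝ)^(n v) := by
    rw [Finset.prod_univ_sum, Fintype.piFinset_univ]
  rw [h1]
  by_cases h : ∀ v, Even (n v)
  · simp only [h, if_true]
    rw [Finset.prod_congr rfl fun v _ => by rw [ising_sum_units_pow, if_pos (h v)]]
    simp [Finset.prod_const, Finset.card_univ]
  · simp only [h, if_false]
    push_neg at h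
    obtain ⟨v, hv⟩ := h
    exact Finset.prod_eq_zero (Finset.mem_univ v) (by rw [ising_sum_units_pow, if_neg hv])

lemma ising_exp_pm (c x : ℝ) (hx : x = 1 ∨ x = -1) :
    Real.exp (c * x) = Real.cosh c * (x * Real.tanh c + 1) := by
  have hc := (Real.cosh_pos c).ne'
  have h1 := Real.cosh_add_sinh c
  have h2 := Real.cosh_sub_sinh c
  rcases hx with rfl | rfl
  · rw [mul_one, Real.tanh_eq_sinh_div_cosh]
    field_simp
    linarith
  · rw [Real.tanh_eq_sinh_div_cosh]
    field_simp
    linarith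

lemma ising_prod_signs {V E : Type*} [Fintype V] [DecidableEq V] [DecidableEq E]
    (s t : E → V) (hst : ∀ e, s e ≠ t e) (σ : V → ℤˣ) (U : Finset E) (W : Finset V) :
    (∏ e ∈ U, ((σ (s e) : ℤ):ℝ) * ((σ (t e) : ℤ):ℝ)) * ∏ v ∈ W, ((σ v : ℤ):ℝ)
      = ∏ v : V, ((σ v : ℤ):ℝ) ^
          ((U.filter fun e => s e = v ∨ t e = v).card + if v ∈ W then 1 else 0) := by
  have hA : (∏ e ∈ U, ((σ (s e) : ℤ):ℝ) * ((σ (t e) : ℤ):ℝ))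
      = ∏ v : V, ((σ v : ℤ):ℝ) ^ (U.filter fun e => s e = v ∨ t e = v).card := by
    have h1 : ∀ e ∈ U, ((σ (s e) : ℤ):ℝ) * ((σ (t e) : ℤ):ℝ)
        = ∏ v : V, (if s e = v ∨ t e = v then ((σ v : ℤ):ℝ) else 1) := by
      intro e _
      have hf : (Finset.univ.filter fun v => s e = v ∨ t e = v) = {s e, t e} := by
        ext v
        simp only [Finset.mem_filter, Finset.mem_univ, true_and, Finset.mem_insert,
          Finset.mem_singleton]
        constructor
        · rintro (rfl | rfl) <;> simp
        · rintro (rfl | rfl) <;> simp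
      rw [← Finset.prod_filter, hf, Finset.prod_pair (hst e)]
    rw [Finset.prod_congr rfl h1, Finset.prod_comm]
    refine Finset.prod_congr rfl fun v _ => ?_
    rw [← Finset.prod_filter, Finset.prod_const]
  have hB : (∏ v ∈ W, ((σ v : ℤ):ℝ))
      = ∏ v : V, ((σ v : ℤ):ℝ) ^ (if v ∈ W then 1 else 0) := by
    have hmem : Finset.univ.filter (fun v => v ∈ W) = W := by ext v; simp
    simp only [pow_ite, pow_one, pow_zero]
    rw [← Finset.prod_filter, hmem]
  rw [hA, hB, ← Finset.prod_mul_distrib]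
  exact Finset.prod_congr rfl fun v _ => (pow_add _ _ _).symm


/-- High-temperature series expansion of the Ising partition function in an external field
(equation (32) with explicit constants): summing over spin configurations `σ : V → {−1,+1}`
(encoded as `V → ℤˣ`), the partition function equals
`2^{|V|} (cosh H)^{|V|} (Π_e cosh(J e)) Σ_{U ⊆ E} (tanh H)^{|odd(U)|} Π_{e∈U} tanh(J e)`. -/
theorem ising_high_temperature_expansion {V E : Type*} [Fintype V] [Fintype E]
    [DecidableEq V] [DecidableEq E]
    (s t : E → V) (hst : ∀ e, s e ≠ t e) (J : E → ℝ) (H : ℝ) :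
    (∑ σ : V → ℤˣ,
        Real.exp ((∑ e : E, J e * ((σ (s e) : ℤ) : ℝ) * ((σ (t e) : ℤ) : ℝ)) +
          H * ∑ v : V, ((σ v : ℤ) : ℝ))) =
      2 ^ Fintype.card V * Real.cosh H ^ Fintype.card V * (∏ e : E, Real.cosh (J e)) *
        ∑ U : Finset E,
          Real.tanh H ^
              (Finset.univ.filter fun v : V =>
                Odd (U.filter fun e => s e = v ∨ t e = v).card).card *
            ∏ e ∈ U, Real.tanh (J e) := by
  have hx : ∀ (σ : V → ℤˣ) (v : V), ((σ v : ℤ):ℝ) = 1 ∨ ((σ v : ℤ):ℝ) = -1 := by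
    intro σ v
    rcases Int.units_eq_one_or (σ v) with h | h <;> simp [h]
  -- Step 1: rewrite the exponential for each configuration
  have step1 : ∀ σ : V → ℤˣ,
      Real.exp ((∑ e : E, J e * ((σ (s e) : ℤ):ℝ) * ((σ (t e) : ℤ):ℝ)) +
          H * ∑ v : V, ((σ v : ℤ):ℝ))
      = ((∏ e : E, Real.cosh (J e)) * Real.cosh H ^ Fintype.card V) *
        ((∏ e : E, (((σ (s e) : ℤ):ℝ) * ((σ (t e) : ℤ):ℝ) * Real.tanh (J e) + 1)) *
         (∏ v : V, (((σ v : ℤ):ℝ) * Real.tanh H + 1))) := by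
    intro σ
    rw [Real.exp_add, Finset.mul_sum, Real.exp_sum, Real.exp_sum]
    have he : ∀ e ∈ (Finset.univ : Finset E),
        Real.exp (J e * ((σ (s e) : ℤ):ℝ) * ((σ (t e) : ℤ):ℝ))
        = Real.cosh (J e) *
          (((σ (s e) : ℤ):ℝ) * ((σ (t e) : ℤ):ℝ) * Real.tanh (J e) + 1) := by
      intro e _
      rw [mul_assoc, ising_exp_pm]
      rcases hx σ (s e) with h | h <;> rcases hx σ (t e) with h' | h' <;>
        rw [h, h'] <;> norm_num
    have hv : ∀ v ∈ (Finset.univ : Finset V),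
        Real.exp (H * ((σ v : ℤ):ℝ))
        = Real.cosh H * (((σ v : ℤ):ℝ) * Real.tanh H + 1) :=
      fun v _ => ising_exp_pm H _ (hx σ v)
    rw [Finset.prod_congr rfl he, Finset.prod_congr rfl hv,
      Finset.prod_mul_distrib, Finset.prod_mul_distrib, Finset.prod_const,
      Finset.card_univ]
    ring
  rw [Finset.sum_congr rfl fun σ _ => step1 σ, ← Finset.mul_sum]
  -- Step 2: expand the products into sums over subsets
  have hP : ∀ σ : V → ℤˣ,
      (∏ e : E, (((σ (s e) : ℤ):ℝ) * ((σ (t e) : ℤ):ℝ) * Real.tanh (J e) + 1))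
      = ∑ U : Finset E, ∏ e ∈ U,
          (((σ (s e) : ℤ):ℝ) * ((σ (t e) : ℤ):ℝ) * Real.tanh (J e)) := by
    intro σ
    rw [Finset.prod_add, Finset.powerset_univ]
    simp
  have hQ : ∀ σ : V → ℤˣ,
      (∏ v : V, (((σ v : ℤ):ℝ) * Real.tanh H + 1))
      = ∑ W : Finset V, ∏ v ∈ W, (((σ v : ℤ):ℝ) * Real.tanh H) := by
    intro σ
    rw [Finset.prod_add, Finset.powerset_univ]
    simp
  have step2 : ∑ σ : V → ℤˣ,
      ((∏ e : E, (((σ (s e) : ℤ):ℝ) * ((σ (t e) : ℤ):ℝ) * Real.tanh (J e) + 1)) *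
       (∏ v : V, (((σ v : ℤ):ℝ) * Real.tanh H + 1)))
      = ∑ U : Finset E, ∑ W : Finset V, ∑ σ : V → ℤˣ,
          ((∏ e ∈ U, (((σ (s e) : ℤ):ℝ) * ((σ (t e) : ℤ):ℝ) * Real.tanh (J e))) *
           (∏ v ∈ W, (((σ v : ℤ):ℝ) * Real.tanh H))) := by
    rw [Finset.sum_congr rfl fun σ _ => by
      rw [hP σ, hQ σ, Finset.sum_mul_sum]]
    rw [Finset.sum_comm]
    exact Finset.sum_congr rfl fun U _ => Finset.sum_comm
  rw [step2]
  -- Step 3: evaluate the spin sum for fixed U, W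
  have step3 : ∀ (U : Finset E) (W : Finset V),
      (∑ σ : V → ℤˣ,
          ((∏ e ∈ U, (((σ (s e) : ℤ):ℝ) * ((σ (t e) : ℤ):ℝ) * Real.tanh (J e))) *
           (∏ v ∈ W, (((σ v : ℤ):ℝ) * Real.tanh H))))
      = ((∏ e ∈ U, Real.tanh (J e)) * Real.tanh H ^ W.card) *
          (if (∀ v : V, Even ((U.filter fun e => s e = v ∨ t e = v).card +
              if v ∈ W then 1 else 0)) then (2:ℝ) ^ Fintype.card V else 0) := by
    intro U W
    have hσ : ∀ σ : V → ℤˣ,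
        ((∏ e ∈ U, (((σ (s e) : ℤ):ℝ) * ((σ (t e) : ℤ):ℝ) * Real.tanh (J e))) *
         (∏ v ∈ W, (((σ v : ℤ):ℝ) * Real.tanh H)))
        = ((∏ e ∈ U, Real.tanh (J e)) * Real.tanh H ^ W.card) *
            ∏ v : V, ((σ v : ℤ):ℝ) ^
              ((U.filter fun e => s e = v ∨ t e = v).card + if v ∈ W then 1 else 0) := by
      intro σ
      have e1 : (∏ e ∈ U, (((σ (s e) : ℤ):ℝ) * ((σ (t e) : ℤ):ℝ) * Real.tanh (J e)))
          = (∏ e ∈ U, ((σ (s e) : ℤ):ℝ) * ((σ (t e) : ℤ):ℝ)) * ∏ e ∈ U, Real.tanh (J e) :=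
        Finset.prod_mul_distrib
      have e2 : (∏ v ∈ W, (((σ v : ℤ):ℝ) * Real.tanh H))
          = (∏ v ∈ W, ((σ v : ℤ):ℝ)) * Real.tanh H ^ W.card := by
        rw [Finset.prod_mul_distrib, Finset.prod_const]
      rw [e1, e2, ← ising_prod_signs s t hst σ U W]
      ring
    rw [Finset.sum_congr rfl fun σ _ => hσ σ, ← Finset.mul_sum, ising_sum_sigma]
  rw [Finset.sum_congr rfl fun U _ => Finset.sum_congr rfl fun W _ => step3 U W]
  -- Step 4: collapse the sum over W
  have step4 : ∀ U : Finset E,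
      (∑ W : Finset V,
        ((∏ e ∈ U, Real.tanh (J e)) * Real.tanh H ^ W.card) *
          (if (∀ v : V, Even ((U.filter fun e => s e = v ∨ t e = v).card +
              if v ∈ W then 1 else 0)) then (2:ℝ) ^ Fintype.card V else 0))
      = ((∏ e ∈ U, Real.tanh (J e)) *
          Real.tanh H ^ (Finset.univ.filter fun v : V =>
            Odd (U.filter fun e => s e = v ∨ t e = v).card).card) *
          (2:ℝ) ^ Fintype.card V := by
    intro U
    set A : Finset V := Finset.univ.filter fun v : V =>
      Odd (U.filter fun e => s e = v ∨ t e = v).card with hA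
    have hcond : ∀ W : Finset V,
        (∀ v : V, Even ((U.filter fun e => s e = v ∨ t e = v).card +
            if v ∈ W then 1 else 0)) ↔ W = A := by
      intro W
      constructor
      · intro h
        ext v
        have hv := h v
        rw [hA, Finset.mem_filter]
        by_cases hvW : v ∈ W
        · rw [if_pos hvW] at hv
          simp only [hvW, true_iff]
          exact ⟨Finset.mem_univ v, Nat.not_even_iff_odd.mp (Nat.even_add_one.mp hv)⟩
        · rw [if_neg hvW, add_zero] at hv
          simp only [hvW, false_iff]
          exact fun hmem => (Nat.not_odd_iff_even.mpr hv) hmem.2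
      · rintro rfl v
        by_cases hv : v ∈ A
        · rw [if_pos hv]
          exact ((Finset.mem_filter.mp hv).2).add_one
        · rw [if_neg hv, add_zero]
          exact Nat.not_odd_iff_even.mp
            (fun ho => hv (Finset.mem_filter.mpr ⟨Finset.mem_univ v, ho⟩))
    have hrw : ∀ W : Finset V,
        ((∏ e ∈ U, Real.tanh (J e)) * Real.tanh H ^ W.card) *
          (if (∀ v : V, Even ((U.filter fun e => s e = v ∨ t e = v).card +
              if v ∈ W then 1 else 0)) then (2:ℝ) ^ Fintype.card V else 0)
        = if W = A then
            ((∏ e ∈ U, Real.tanh (J e)) * Real.tanh H ^ W.card) * (2:ℝ) ^ Fintype.card V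
          else 0 := by
      intro W
      by_cases hW : W = A
      · rw [if_pos ((hcond W).mpr hW), if_pos hW]
      · rw [if_neg (fun hc => hW ((hcond W).mp hc)), if_neg hW, mul_zero]
    rw [Finset.sum_congr rfl fun W _ => hrw W]
    rw [Finset.sum_ite_eq' Finset.univ A
      (fun W => ((∏ e ∈ U, Real.tanh (J e)) * Real.tanh H ^ W.card) * (2:ℝ) ^ Fintype.card V)]
    simp
  rw [Finset.sum_congr rfl fun U _ => step4 U]
  rw [Finset.mul_sum, Finset.mul_sum]
  exact Finset.sum_congr rfl fun U _ => by ring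
end

section
/- Edge marginal of the one-dimensional Ising model with periodic boundary conditions (Appendix B): let n ≥ 3 and J : ZMod n → ℝ. For the Ising probability measure on σ : ZMod n → {−1,1} proportional to Π_{i∈ZMod n} exp(J(i)·σ(i)·σ(i+1)), the probability that σ(k) = σ(k+1) for any fixed k ∈ ZMod n equals (e^{J(k)}/(2·cosh J(k))) · (1 + Π_{i≠k} tanh J(i)) / (1 + Π_{i∈ZMod n} tanh J(i)). Explicitly: (Σ_{σ : σ(k)=σ(k+1)} Π_i e^{J(i)σ(i)σ(i+1)}) / (Σ_σ Π_i e^{J(i)σ(i)σ(i+1)}) = (e^{J(k)}/(2cosh J(k)))·(1 + Π_{i≠k} tanh J(i))/(1 + Π_i tanh J(i)). -/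
open scoped BigOperators

lemma exp_eq_aux (t : ℝ) (u v : ℤˣ) :
    Real.exp (t * ((u:ℤ):ℝ) * ((v:ℤ):ℝ)) =
      Real.cosh t * (1 + ((u:ℤ):ℝ) * ((v:ℤ):ℝ) * Real.tanh t) := by
  have hc := Real.cosh_pos t
  rcases Int.units_eq_one_or u with hu | hu <;> rcases Int.units_eq_one_or v with hv | hv <;>
    subst hu <;> subst hv <;>
    simp [Real.tanh_eq_sinh_div_cosh] <;>
    field_simp <;>
    nlinarith [Real.cosh_add_sinh t, Real.cosh_sub_sinh t]

lemma sum_units (f : ℤˣ → ℝ) : ∑ u : ℤˣ, f u = f 1 + f (-1) := by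
  have : (Finset.univ : Finset ℤˣ) = {1, -1} := by
    ext u; simp [Int.units_eq_one_or u]
  rw [this, Finset.sum_pair (by decide)]

lemma abs_tanh_lt_one (x : ℝ) : |Real.tanh x| < 1 := by
  have hc := Real.cosh_pos x
  rw [Real.tanh_eq_sinh_div_cosh, abs_div, abs_of_pos hc, div_lt_one hc]
  have h := Real.cosh_sq x
  nlinarith [sq_abs (Real.sinh x), abs_nonneg (Real.sinh x)]

lemma unit_sq (u : ℤˣ) : ((u : ℤ) : ℝ) * ((u : ℤ) : ℝ) = 1 := by
  rcases Int.units_eq_one_or u with h | h <;> simp [h]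

lemma unit_mul_neg {u v : ℤˣ} (h : u ≠ v) : ((u : ℤ) : ℝ) * ((v : ℤ) : ℝ) = -1 := by
  rcases Int.units_eq_one_or u with hu | hu <;> rcases Int.units_eq_one_or v with hv | hv <;>
    subst hu <;> subst hv <;> simp_all

lemma invariant_lemma {n : ℕ} [NeZero n] (S : Finset (ZMod n))
    (h : S.image (· + 1) = S) : S = ∅ ∨ S = Finset.univ := by
  rcases S.eq_empty_or_nonempty with h0 | ⟨a, ha⟩
  · left; exact h0
  · right
    have step : ∀ x ∈ S, x + 1 ∈ S := fun x hx => h ▸ Finset.mem_image_of_mem _ hx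
    have h2 : ∀ m : ℕ, a + m ∈ S := by
      intro m
      induction m with
      | zero => simpa using ha
      | succ m ih => push_cast; rw [← add_assoc]; exact step _ ih
    apply Finset.eq_univ_of_forall
    intro b
    have : a + ((b - a).val : ZMod n) = b := by
      rw [ZMod.natCast_val, ZMod.cast_id]; ring
    rw [← this]
    exact h2 _

lemma vertex_sum {n : ℕ} [NeZero n] (A B : Finset (ZMod n)) :
    ∑ σ : ZMod n → ℤˣ,
      (∏ j ∈ A, ((σ j : ℤ) : ℝ)) * (∏ j ∈ B, ((σ j : ℤ) : ℝ)) =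
    if A = B then (2 : ℝ) ^ n else 0 := by
  have hrw : ∀ σ : ZMod n → ℤˣ,
      (∏ j ∈ A, ((σ j : ℤ) : ℝ)) * (∏ j ∈ B, ((σ j : ℤ) : ℝ)) =
      ∏ j : ZMod n, ((if j ∈ A then ((σ j : ℤ) : ℝ) else 1) *
        (if j ∈ B then ((σ j : ℤ) : ℝ) else 1)) := by
    intro σ
    rw [Finset.prod_mul_distrib, Finset.prod_ite_mem, Finset.prod_ite_mem,
      Finset.univ_inter, Finset.univ_inter]
  simp_rw [hrw]
  have := Finset.prod_univ_sum (fun _ : ZMod n => (Finset.univ : Finset ℤˣ))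
    (fun j u => (if j ∈ A then ((u : ℤ) : ℝ) else 1) * (if j ∈ B then ((u : ℤ) : ℝ) else 1))
  rw [Fintype.piFinset_univ] at this
  rw [← this]
  have hfac : ∀ j : ZMod n,
      (∑ u : ℤˣ, (if j ∈ A then ((u : ℤ) : ℝ) else 1) * (if j ∈ B then ((u : ℤ) : ℝ) else 1)) =
      if ((j ∈ A) ↔ (j ∈ B)) then 2 else 0 := by
    intro j
    rw [sum_units]
    by_cases hA : j ∈ A <;> by_cases hB : j ∈ B <;> simp [hA, hB] <;> norm_num
  simp_rw [hfac]
  by_cases hAB : A = B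
  · subst hAB
    simp [Finset.prod_const, ZMod.card]
  · have : ∃ j, ¬((j ∈ A) ↔ (j ∈ B)) := by
      by_contra hcon
      push_neg at hcon
      exact hAB (Finset.ext fun j => hcon j)
    obtain ⟨j, hj⟩ := this
    rw [if_neg hAB]
    exact Finset.prod_eq_zero (Finset.mem_univ j) (by rw [if_neg hj])

lemma edge_sum {n : ℕ} [NeZero n] (E : Finset (ZMod n)) :
    ∑ σ : ZMod n → ℤˣ,
      ∏ i ∈ E, (((σ i : ℤ) : ℝ) * ((σ (i + 1) : ℤ) : ℝ)) =
    if E = E.image (· + 1) then (2 : ℝ) ^ n else 0 := by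
  have hrw : ∀ σ : ZMod n → ℤˣ,
      (∏ i ∈ E, (((σ i : ℤ) : ℝ) * ((σ (i + 1) : ℤ) : ℝ))) =
      (∏ j ∈ E, ((σ j : ℤ) : ℝ)) * (∏ j ∈ E.image (· + 1), ((σ j : ℤ) : ℝ)) := by
    intro σ
    rw [Finset.prod_mul_distrib]
    congr 1
    rw [Finset.prod_image (fun x _ y _ h => by simpa using h)]
  simp_rw [hrw]
  exact vertex_sum E (E.image (· + 1))

lemma image_univ_add_one {n : ℕ} [NeZero n] :
    (Finset.univ : Finset (ZMod n)).image (· + 1) = Finset.univ :=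
  Finset.image_univ_of_surjective (fun b => ⟨b - 1, by ring⟩)

lemma expand_prod {n : ℕ} [NeZero n] (t : ZMod n → ℝ) (σ : ZMod n → ℤˣ) :
    (∏ i : ZMod n, (1 + ((σ i : ℤ) : ℝ) * ((σ (i + 1) : ℤ) : ℝ) * t i)) =
    ∑ S ∈ (Finset.univ : Finset (ZMod n)).powerset,
      (∏ i ∈ S, (((σ i : ℤ) : ℝ) * ((σ (i + 1) : ℤ) : ℝ))) * ∏ i ∈ S, t i := by
  have := Finset.prod_add (fun i : ZMod n => ((σ i : ℤ) : ℝ) * ((σ (i + 1) : ℤ) : ℝ) * t i)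
    (fun _ => (1 : ℝ)) Finset.univ
  simp only [Finset.prod_const_one, mul_one] at this
  simp_rw [add_comm (1 : ℝ)] at this ⊢
  rw [this]
  exact Finset.sum_congr rfl fun S _ => by rw [Finset.prod_mul_distrib]

lemma Z_sum {n : ℕ} [NeZero n] (t : ZMod n → ℝ) :
    ∑ σ : ZMod n → ℤˣ, ∏ i : ZMod n, (1 + ((σ i : ℤ) : ℝ) * ((σ (i + 1) : ℤ) : ℝ) * t i) =
    (2 : ℝ) ^ n * (1 + ∏ i : ZMod n, t i) := by
  simp_rw [expand_prod]
  rw [Finset.sum_comm]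
  have hterm : ∀ S ∈ (Finset.univ : Finset (ZMod n)).powerset,
      (∑ σ : ZMod n → ℤˣ,
        (∏ i ∈ S, (((σ i : ℤ) : ℝ) * ((σ (i + 1) : ℤ) : ℝ))) * ∏ i ∈ S, t i) =
      (if S = S.image (· + 1) then (2 : ℝ) ^ n else 0) * ∏ i ∈ S, t i := by
    intro S _
    rw [← Finset.sum_mul, edge_sum]
  rw [Finset.sum_congr rfl hterm]
  rw [Finset.sum_eq_add_of_mem (∅ : Finset (ZMod n)) Finset.univ
    (Finset.mem_powerset.mpr (Finset.empty_subset _))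
    (Finset.mem_powerset.mpr le_rfl)
    (Ne.symm (Finset.nonempty_iff_ne_empty.mp Finset.univ_nonempty))
    ?_]
  · simp [image_univ_add_one]
    ring
  · intro S _ ⟨h1, h2⟩
    rw [if_neg, zero_mul]
    intro hS
    rcases invariant_lemma S hS.symm with h | h
    · exact h1 h
    · exact h2 h

lemma edge_sq {n : ℕ} [NeZero n] (σ : ZMod n → ℤˣ) (k : ZMod n) (x : ℝ) :
    ((σ k : ℤ) : ℝ) * ((σ (k+1) : ℤ) : ℝ) * (((σ k : ℤ) : ℝ) * ((σ (k+1) : ℤ) : ℝ) * x) = x := by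
  have h1 := unit_sq (σ k); have h2 := unit_sq (σ (k+1))
  calc ((σ k : ℤ) : ℝ) * ((σ (k+1) : ℤ) : ℝ) * (((σ k : ℤ) : ℝ) * ((σ (k+1) : ℤ) : ℝ) * x)
      = (((σ k : ℤ) : ℝ) * ((σ k : ℤ) : ℝ)) * ((((σ (k+1) : ℤ) : ℝ) * ((σ (k+1) : ℤ) : ℝ)) * x) := by ring
    _ = x := by rw [h1, h2, one_mul, one_mul]

lemma helper_sum {n : ℕ} [NeZero n] (k : ZMod n) (S : Finset (ZMod n)) :
    ∑ σ : ZMod n → ℤˣ,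
      (((σ k : ℤ) : ℝ) * ((σ (k+1) : ℤ) : ℝ)) *
        ∏ i ∈ S, (((σ i : ℤ) : ℝ) * ((σ (i + 1) : ℤ) : ℝ)) =
    if S = {k} ∨ S = Finset.univ.erase k then (2 : ℝ) ^ n else 0 := by
  by_cases hk : k ∈ S
  · have hrw : ∀ σ : ZMod n → ℤˣ,
        (((σ k : ℤ) : ℝ) * ((σ (k+1) : ℤ) : ℝ)) *
          ∏ i ∈ S, (((σ i : ℤ) : ℝ) * ((σ (i + 1) : ℤ) : ℝ)) =
        ∏ i ∈ S.erase k, (((σ i : ℤ) : ℝ) * ((σ (i + 1) : ℤ) : ℝ)) := by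
      intro σ
      rw [← Finset.mul_prod_erase S _ hk, edge_sq]
    simp_rw [hrw]
    rw [edge_sum]
    congr 1
    rw [eq_iff_iff]
    constructor
    · intro h
      rcases invariant_lemma _ h.symm with h0 | h0
      · left
        rcases (Finset.erase_eq_empty_iff S k).mp h0 with h1 | h1
        · exact absurd h1 (Finset.nonempty_iff_ne_empty.mp ⟨k, hk⟩)
        · exact h1
      · exact absurd (h0 ▸ Finset.mem_univ k) (Finset.notMem_erase k S)
    · rintro (h | h)
      · subst h; simp
      · exact absurd hk (h ▸ Finset.notMem_erase k Finset.univ)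
  · have hrw : ∀ σ : ZMod n → ℤˣ,
        (((σ k : ℤ) : ℝ) * ((σ (k+1) : ℤ) : ℝ)) *
          ∏ i ∈ S, (((σ i : ℤ) : ℝ) * ((σ (i + 1) : ℤ) : ℝ)) =
        ∏ i ∈ insert k S, (((σ i : ℤ) : ℝ) * ((σ (i + 1) : ℤ) : ℝ)) := by
      intro σ
      rw [Finset.prod_insert hk]
    simp_rw [hrw]
    rw [edge_sum]
    congr 1
    rw [eq_iff_iff]
    constructor
    · intro h
      rcases invariant_lemma _ h.symm with h0 | h0
      · exact absurd (Finset.mem_insert_self k S) (h0 ▸ Finset.notMem_empty k)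
      · right
        rw [← Finset.erase_insert hk, h0]
    · rintro (h | h)
      · exact absurd (h ▸ Finset.mem_singleton_self k) hk
      · subst h
        rw [Finset.insert_erase (Finset.mem_univ k)]
        exact image_univ_add_one.symm

lemma N_sum {n : ℕ} [NeZero n] (hn : 3 ≤ n) (t : ZMod n → ℝ) (k : ZMod n) :
    ∑ σ : ZMod n → ℤˣ, (((σ k : ℤ) : ℝ) * ((σ (k+1) : ℤ) : ℝ)) *
        ∏ i : ZMod n, (1 + ((σ i : ℤ) : ℝ) * ((σ (i + 1) : ℤ) : ℝ) * t i) =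
    (2 : ℝ) ^ n * (t k + ∏ i ∈ Finset.univ.erase k, t i) := by
  simp_rw [expand_prod, Finset.mul_sum]
  rw [Finset.sum_comm]
  have hterm : ∀ S ∈ (Finset.univ : Finset (ZMod n)).powerset,
      (∑ σ : ZMod n → ℤˣ,
        (((σ k : ℤ) : ℝ) * ((σ (k+1) : ℤ) : ℝ)) *
          ((∏ i ∈ S, (((σ i : ℤ) : ℝ) * ((σ (i + 1) : ℤ) : ℝ))) * ∏ i ∈ S, t i)) =
      (if S = {k} ∨ S = Finset.univ.erase k then (2 : ℝ) ^ n else 0) * ∏ i ∈ S, t i := by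
    intro S _
    simp_rw [← mul_assoc]
    rw [← Finset.sum_mul, helper_sum]
  rw [Finset.sum_congr rfl hterm]
  have hne : ({k} : Finset (ZMod n)) ≠ Finset.univ.erase k := by
    intro h
    have h1 : ({k} : Finset (ZMod n)).card = 1 := Finset.card_singleton k
    have h2 : (Finset.univ.erase k).card = n - 1 := by
      rw [Finset.card_erase_of_mem (Finset.mem_univ k), Finset.card_univ, ZMod.card]
    have := congrArg Finset.card h
    rw [h1, h2] at this
    omega
  rw [Finset.sum_eq_add_of_mem ({k} : Finset (ZMod n)) (Finset.univ.erase k)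
    (Finset.mem_powerset.mpr (Finset.subset_univ _))
    (Finset.mem_powerset.mpr (Finset.subset_univ _))
    hne ?_]
  · simp
    ring
  · intro S _ ⟨h1, h2⟩
    rw [if_neg, zero_mul]
    rintro (h | h)
    · exact h1 h
    · exact h2 h

/-- Edge marginal of the one-dimensional Ising model on a cycle of length `n` with
couplings `J : ZMod n → ℝ` (edge `i` joins `i` and `i+1`): the probability that
`σ(k) = σ(k+1)` equals
`(e^{J k}/(2 cosh(J k)))·(1 + Π_{i≠k} tanh(J i))/(1 + Π_i tanh(J i))`. -/
theorem ising_cycle_edge_marginal (n : ℕ) [NeZero n] (hn : 3 ≤ n)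
    (J : ZMod n → ℝ) (k : ZMod n) :
    (∑ σ ∈ Finset.univ.filter (fun σ : ZMod n → ℤˣ => σ k = σ (k + 1)),
        ∏ i : ZMod n, Real.exp (J i * ((σ i : ℤ) : ℝ) * ((σ (i + 1) : ℤ) : ℝ))) /
      (∑ σ : ZMod n → ℤˣ,
        ∏ i : ZMod n, Real.exp (J i * ((σ i : ℤ) : ℝ) * ((σ (i + 1) : ℤ) : ℝ))) =
      Real.exp (J k) / (2 * Real.cosh (J k)) *
          (1 + ∏ i ∈ Finset.univ.erase k, Real.tanh (J i)) /
        (1 + ∏ i : ZMod n, Real.tanh (J i)) := by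
  set t : ZMod n → ℝ := fun i => Real.tanh (J i) with ht
  set c : ℝ := ∏ i : ZMod n, Real.cosh (J i) with hcdef
  have hc : 0 < c := Finset.prod_pos fun i _ => Real.cosh_pos (J i)
  have hexp : ∀ σ : ZMod n → ℤˣ,
      (∏ i : ZMod n, Real.exp (J i * ((σ i : ℤ) : ℝ) * ((σ (i + 1) : ℤ) : ℝ))) =
      c * ∏ i : ZMod n, (1 + ((σ i : ℤ) : ℝ) * ((σ (i + 1) : ℤ) : ℝ) * t i) := by
    intro σ
    simp_rw [exp_eq_aux]
    rw [Finset.prod_mul_distrib]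
  have hZ : (∑ σ : ZMod n → ℤˣ,
      ∏ i : ZMod n, Real.exp (J i * ((σ i : ℤ) : ℝ) * ((σ (i + 1) : ℤ) : ℝ))) =
      c * ((2 : ℝ) ^ n * (1 + ∏ i : ZMod n, t i)) := by
    simp_rw [hexp]
    rw [← Finset.mul_sum, Z_sum]
  have hN2 : (∑ σ : ZMod n → ℤˣ, (((σ k : ℤ) : ℝ) * ((σ (k+1) : ℤ) : ℝ)) *
      ∏ i : ZMod n, Real.exp (J i * ((σ i : ℤ) : ℝ) * ((σ (i + 1) : ℤ) : ℝ))) =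
      c * ((2 : ℝ) ^ n * (t k + ∏ i ∈ Finset.univ.erase k, t i)) := by
    simp_rw [hexp, mul_left_comm _ c]
    rw [← Finset.mul_sum, N_sum hn]
  have hfilter : (∑ σ ∈ Finset.univ.filter (fun σ : ZMod n → ℤˣ => σ k = σ (k + 1)),
      ∏ i : ZMod n, Real.exp (J i * ((σ i : ℤ) : ℝ) * ((σ (i + 1) : ℤ) : ℝ))) =
      ((∑ σ : ZMod n → ℤˣ,
          ∏ i : ZMod n, Real.exp (J i * ((σ i : ℤ) : ℝ) * ((σ (i + 1) : ℤ) : ℝ))) +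
        (∑ σ : ZMod n → ℤˣ, (((σ k : ℤ) : ℝ) * ((σ (k+1) : ℤ) : ℝ)) *
          ∏ i : ZMod n, Real.exp (J i * ((σ i : ℤ) : ℝ) * ((σ (i + 1) : ℤ) : ℝ)))) / 2 := by
    rw [Finset.sum_filter, ← Finset.sum_add_distrib, Finset.sum_div]
    apply Finset.sum_congr rfl
    intro σ _
    by_cases h : σ k = σ (k + 1)
    · rw [if_pos h, ← h, unit_sq]
      ring
    · rw [if_neg h, unit_mul_neg h]
      ring
  rw [hfilter, hZ, hN2]
  have hcoshk : (0 : ℝ) < Real.cosh (J k) := Real.cosh_pos (J k)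
  have hexpk : Real.exp (J k) = Real.cosh (J k) * (1 + t k) := by
    have := exp_eq_aux (J k) 1 1
    simpa using this
  have hP1 : (0 : ℝ) < 1 + ∏ i : ZMod n, t i := by
    have habs : |∏ i : ZMod n, t i| < 1 := by
      rw [Finset.abs_prod]
      calc ∏ i : ZMod n, |t i|
          = |t 0| * ∏ i ∈ Finset.univ.erase 0, |t i| :=
            (Finset.mul_prod_erase _ _ (Finset.mem_univ 0)).symm
        _ ≤ |t 0| * 1 := by
            apply mul_le_mul_of_nonneg_left _ (abs_nonneg _)
            exact Finset.prod_le_one (fun i _ => abs_nonneg _)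
              (fun i _ => le_of_lt (abs_tanh_lt_one (J i)))
        _ < 1 := by rw [mul_one]; exact abs_tanh_lt_one (J 0)
    have := neg_abs_le (∏ i : ZMod n, t i)
    linarith
  have hrel : (∏ i : ZMod n, t i) = t k * ∏ i ∈ Finset.univ.erase k, t i :=
    (Finset.mul_prod_erase _ _ (Finset.mem_univ k)).symm
  rw [hexpk]
  have h2n : (0 : ℝ) < (2 : ℝ) ^ n := by positivity
  field_simp
  linear_combination hrel
end

section
/- Edge marginal of the homogeneous one-dimensional q-state Potts model with periodic boundary conditions (Appendix B): let n ≥ 3, q ≥ 2, and J ∈ ℝ. For the probability measure on x : ZMod n → ZMod q proportional to Π_{i∈ZMod n} exp(J·[x(i) = x(i+1)]), for any fixed k ∈ ZMod n the probability that x(k) = x(k+1) equals e^{J}·( (e^{J}+q−1)^{n−1} + (q−1)(e^{J}−1)^{n−1} ) / ( (e^{J}+q−1)^{n} + (q−1)(e^{J}−1)^{n} ). -/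
open scoped BigOperators

section PottsAux
variable {V : Type*} [Fintype V] [DecidableEq V]

noncomputable def pottsP (W : V → V → ℝ) : ℕ → V → V → ℝ
  | 0 => fun a b => if a = b then 1 else 0
  | (m+1) => fun a b => ∑ c, W a c * pottsP W m c b

lemma pottsP_succ_right (W : V → V → ℝ) :
    ∀ (m : ℕ) (a b : V), pottsP W (m+1) a b = ∑ c, pottsP W m a c * W c b := by
  intro m
  induction m with
  | zero => intro a b; simp [pottsP]
  | succ m ih =>
    intro a b
    show (∑ c, W a c * pottsP W (m+1) c b) = ∑ c, pottsP W (m+1) a c * W c b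
    have hl : (∑ c, W a c * pottsP W (m+1) c b)
        = ∑ c, ∑ d, W a c * (pottsP W m c d * W d b) :=
      Finset.sum_congr rfl fun c _ => by rw [ih, Finset.mul_sum]
    have hr : (∑ c, pottsP W (m+1) a c * W c b)
        = ∑ c, ∑ d, W a d * pottsP W m d c * W c b :=
      Finset.sum_congr rfl fun c _ => by
        rw [show pottsP W (m+1) a c = ∑ d, W a d * pottsP W m d c from rfl, Finset.sum_mul]
    rw [hl, hr, Finset.sum_comm]
    exact Finset.sum_congr rfl fun c _ => Finset.sum_congr rfl fun d _ => by ring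

lemma potts_path (W : V → V → ℝ) :
    ∀ (m : ℕ) (f : V → V → ℝ),
    (∑ z : Fin (m+1) → V,
        (∏ j : Fin m, W (z j.castSucc) (z j.succ)) * f (z 0) (z (Fin.last m)))
      = ∑ a, ∑ b, pottsP W m a b * f a b := by
  intro m
  induction m with
  | zero =>
    intro f
    rw [Fintype.sum_equiv (Equiv.funUnique (Fin 1) V) _ (fun a => f a a)
      (by intro z; simp [Fin.last])]
    simp [pottsP]
  | succ m ih =>
    intro f
    rw [← ((Fin.consEquiv (fun _ : Fin (m+2) => V)).sum_comp
      (fun z => (∏ j : Fin (m+1), W (z j.castSucc) (z j.succ)) * f (z 0) (z (Fin.last (m+1)))))]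
    rw [Fintype.sum_prod_type]
    have key : ∀ (a : V) (y : Fin (m+1) → V),
        (∏ j : Fin (m+1), W ((Fin.cons a y : Fin (m+2) → V) j.castSucc)
            ((Fin.cons a y : Fin (m+2) → V) j.succ))
          * f ((Fin.cons a y : Fin (m+2) → V) 0)
            ((Fin.cons a y : Fin (m+2) → V) (Fin.last (m+1)))
        = (∏ j : Fin m, W (y j.castSucc) (y j.succ)) * (W a (y 0) * f a (y (Fin.last m))) := by
      intro a y
      rw [Fin.prod_univ_succ]
      have h0 : (Fin.cons a y : Fin (m+2) → V) (Fin.castSucc 0) = a := rfl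
      have h1 : (Fin.cons a y : Fin (m+2) → V) (Fin.succ 0) = y 0 := Fin.cons_succ _ _ _
      have h2 : ∀ j : Fin m,
          (Fin.cons a y : Fin (m+2) → V) (Fin.castSucc j.succ) = y j.castSucc := by
        intro j
        rw [← Fin.succ_castSucc]
        exact Fin.cons_succ _ _ _
      have h3 : ∀ j : Fin m,
          (Fin.cons a y : Fin (m+2) → V) (Fin.succ j.succ) = y j.succ := fun j =>
        Fin.cons_succ _ _ _
      have h4 : (Fin.cons a y : Fin (m+2) → V) 0 = a := rfl
      have h5 : (Fin.cons a y : Fin (m+2) → V) (Fin.last (m+1)) = y (Fin.last m) := by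
        rw [← Fin.succ_last]
        exact Fin.cons_succ _ _ _
      rw [h0, h1, h4, h5]
      rw [Finset.prod_congr rfl (fun j _ => by rw [h2 j, h3 j])]
      ring
    have step : ∀ a : V,
        (∑ y : Fin (m+1) → V,
          (∏ j : Fin m, W (y j.castSucc) (y j.succ)) * (W a (y 0) * f a (y (Fin.last m))))
          = ∑ b, ∑ c, pottsP W m b c * (W a b * f a c) := fun a =>
      ih (fun b c => W a b * f a c)
    calc (∑ a : V, ∑ y : Fin (m+1) → V,
          (fun z : Fin (m+2) → V => (∏ j : Fin (m+1), W (z j.castSucc) (z j.succ))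
            * f (z 0) (z (Fin.last (m+1)))) ((Fin.consEquiv fun _ => V) (a, y)))
        = ∑ a : V, ∑ b, ∑ c, pottsP W m b c * (W a b * f a c) := by
          refine Finset.sum_congr rfl fun a _ => ?_
          rw [← step a]
          exact Finset.sum_congr rfl fun y _ => key a y
      _ = ∑ a, ∑ b, pottsP W (m+1) a b * f a b := by
          refine Finset.sum_congr rfl fun a _ => ?_
          rw [Finset.sum_comm]
          refine Finset.sum_congr rfl fun b _ => ?_
          show (∑ c, pottsP W m c b * (W a c * f a b))
            = (∑ c, W a c * pottsP W m c b) * f a b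
          rw [Finset.sum_mul]
          exact Finset.sum_congr rfl fun c _ => by ring

lemma pottsP_closed [Nonempty V] (c : ℝ) (W : V → V → ℝ)
    (hW : ∀ a b, W a b = 1 + c * (if a = b then 1 else 0)) :
    ∀ (m : ℕ) (a b : V), pottsP W m a b =
      ((c + Fintype.card V)^m - c^m)/(Fintype.card V) + (if a = b then c^m else 0) := by
  have hq : (0:ℝ) < Fintype.card V := by exact_mod_cast Fintype.card_pos
  intro m
  induction m with
  | zero => intro a b; simp [pottsP]
  | succ m ih =>
    intro a b
    show (∑ d, W a d * pottsP W m d b) = _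
    simp_rw [hW, ih]
    set A := ((c + Fintype.card V)^m - c^m)/(Fintype.card V) with hA
    simp only [add_mul, mul_add, one_mul, mul_one, mul_zero, add_zero, mul_ite, ite_mul,
      zero_mul, Finset.sum_add_distrib, Finset.sum_ite_eq, Finset.sum_ite_eq',
      Finset.sum_const, Finset.mem_univ, if_true, nsmul_eq_mul, Finset.card_univ]
    rw [hA]
    split_ifs <;> field_simp <;> ring

lemma pottsP_trace [Nonempty V] (c : ℝ) (W : V → V → ℝ)
    (hW : ∀ a b, W a b = 1 + c * (if a = b then 1 else 0)) (m : ℕ) :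
    ∑ a, pottsP W m a a = (c + Fintype.card V)^m + (Fintype.card V - 1) * c^m := by
  have hq : (0:ℝ) < Fintype.card V := by exact_mod_cast Fintype.card_pos
  simp only [pottsP_closed c W hW m, if_true, Finset.sum_const, Finset.mem_univ,
    nsmul_eq_mul, Finset.card_univ]
  field_simp
  ring

end PottsAux

/-- Edge marginal of the homogeneous 1D q-state Potts model on a cycle of length `n`:
the probability that `x(k) = x(k+1)` equals
`e^J·((e^J+q−1)^{n−1} + (q−1)(e^J−1)^{n−1})/((e^J+q−1)^n + (q−1)(e^J−1)^n)`. -/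
theorem potts_cycle_edge_marginal (n q : ℕ) [NeZero n] [NeZero q]
    (hn : 3 ≤ n) (hq : 2 ≤ q) (J : ℝ) (k : ZMod n) :
    (∑ x ∈ Finset.univ.filter (fun x : ZMod n → ZMod q => x k = x (k + 1)),
        ∏ i : ZMod n, Real.exp (J * (if x i = x (i + 1) then 1 else 0))) /
      (∑ x : ZMod n → ZMod q,
        ∏ i : ZMod n, Real.exp (J * (if x i = x (i + 1) then 1 else 0))) =
      Real.exp J *
          ((Real.exp J + (q : ℝ) - 1) ^ (n - 1) +
            ((q : ℝ) - 1) * (Real.exp J - 1) ^ (n - 1)) /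
        ((Real.exp J + (q : ℝ) - 1) ^ n + ((q : ℝ) - 1) * (Real.exp J - 1) ^ n) := by
  obtain ⟨m, rfl⟩ : ∃ m, n = m + 1 := ⟨n - 1, by omega⟩
  haveI : Nonempty (ZMod q) := ⟨0⟩
  set W : ZMod q → ZMod q → ℝ := fun a b => Real.exp (J * (if a = b then 1 else 0)) with hWdef
  have hW : ∀ a b : ZMod q, W a b = 1 + (Real.exp J - 1) * (if a = b then 1 else 0) := by
    intro a b; by_cases h : a = b <;> simp [hWdef, h]
  have hcard : (Fintype.card (ZMod q) : ℝ) = q := by rw [ZMod.card]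
  -- the breaking bijection
  set e : Fin (m+1) → ZMod (m+1) := fun j => k + 1 + (j.val : ZMod (m+1)) with he
  have hebij : Function.Bijective e := by
    refine (Fintype.bijective_iff_injective_and_card e).2 ⟨?_, by simp [ZMod.card]⟩
    intro j₁ j₂ h
    have h' : ((j₁.val : ℕ) : ZMod (m+1)) = ((j₂.val : ℕ) : ZMod (m+1)) := by
      simpa [he] using h
    have := congrArg ZMod.val h'
    rwa [ZMod.val_natCast_of_lt j₁.isLt, ZMod.val_natCast_of_lt j₂.isLt, ← Fin.ext_iff] at this
  have hsucc : ∀ j : Fin m, e j.castSucc + 1 = e j.succ := by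
    intro j
    simp only [he, Fin.coe_castSucc, Fin.val_succ, Nat.cast_add, Nat.cast_one]
    ring
  have hlastk : e (Fin.last m) = k := by
    have : ((m : ℕ) : ZMod (m+1)) + 1 = 0 := by
      have := ZMod.natCast_self (m+1)
      push_cast at this
      linear_combination (norm := ring_nf) this
    simp only [he, Fin.val_last]
    linear_combination (norm := ring_nf) this
  have h0k : e 0 = k + 1 := by simp [he]
  have hlast1 : e (Fin.last m) + 1 = e 0 := by rw [hlastk, h0k]
  set E : (ZMod (m+1) → ZMod q) ≃ (Fin (m+1) → ZMod q) :=
    Equiv.arrowCongr (Equiv.ofBijective e hebij).symm (Equiv.refl _) with hE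
  have hEapp : ∀ (x : ZMod (m+1) → ZMod q) (j : Fin (m+1)), E x j = x (e j) := by
    intro x j; rfl
  have hprod : ∀ x : ZMod (m+1) → ZMod q,
      (∏ i : ZMod (m+1), W (x i) (x (i+1)))
        = (∏ j : Fin m, W ((E x) j.castSucc) ((E x) j.succ))
            * W ((E x) (Fin.last m)) ((E x) 0) := by
    intro x
    rw [← Fintype.prod_bijective e hebij (fun j => W (x (e j)) (x (e j + 1)))
      (fun i => W (x i) (x (i+1))) (fun j => rfl)]
    rw [Fin.prod_univ_castSucc]
    rw [hlast1]
    refine congrArg (· * _) (Finset.prod_congr rfl fun j _ => ?_)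
    rw [hsucc j]
    rfl
  -- trace formula
  have htr : ∀ M : ℕ, (∑ a, pottsP W M a a)
      = (Real.exp J + (q:ℝ) - 1) ^ M + ((q:ℝ) - 1) * (Real.exp J - 1) ^ M := by
    intro M
    rw [pottsP_trace (Real.exp J - 1) W hW M, hcard]
    ring_nf
  -- denominator
  have hden : (∑ x : ZMod (m+1) → ZMod q,
        ∏ i : ZMod (m+1), Real.exp (J * (if x i = x (i + 1) then 1 else 0)))
      = (Real.exp J + (q:ℝ) - 1) ^ (m+1) + ((q:ℝ) - 1) * (Real.exp J - 1) ^ (m+1) := by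
    rw [show (∑ x : ZMod (m+1) → ZMod q,
        ∏ i : ZMod (m+1), Real.exp (J * (if x i = x (i + 1) then 1 else 0)))
        = ∑ z : Fin (m+1) → ZMod q,
            (∏ j : Fin m, W (z j.castSucc) (z j.succ))
              * (fun a b => W b a) (z 0) (z (Fin.last m)) from
      Fintype.sum_equiv E _ _ (fun x => hprod x)]
    rw [potts_path W m (fun a b => W b a)]
    rw [show (∑ a, ∑ b, pottsP W m a b * (fun a b => W b a) a b)
        = ∑ a, pottsP W (m+1) a a from
      Finset.sum_congr rfl fun a _ => (pottsP_succ_right W m a a).symm]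
    exact htr (m+1)
  -- numerator
  have hnum : (∑ x ∈ Finset.univ.filter
        (fun x : ZMod (m+1) → ZMod q => x k = x (k + 1)),
        ∏ i : ZMod (m+1), Real.exp (J * (if x i = x (i + 1) then 1 else 0)))
      = Real.exp J * ((Real.exp J + (q:ℝ) - 1) ^ m
          + ((q:ℝ) - 1) * (Real.exp J - 1) ^ m) := by
    rw [Finset.sum_filter]
    rw [show (∑ x : ZMod (m+1) → ZMod q,
        if x k = x (k + 1) then
          ∏ i : ZMod (m+1), Real.exp (J * (if x i = x (i + 1) then 1 else 0)) else 0)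
        = ∑ z : Fin (m+1) → ZMod q,
            (∏ j : Fin m, W (z j.castSucc) (z j.succ))
              * (fun a b => if b = a then W b a else 0) (z 0) (z (Fin.last m)) from
      Fintype.sum_equiv E _ _ (fun x => ?_)]
    · rw [potts_path W m (fun a b => if b = a then W b a else 0)]
      have h1 : ∀ a : ZMod q,
          (∑ b, pottsP W m a b * (fun a b => if b = a then W b a else 0) a b)
            = pottsP W m a a * Real.exp J := by
        intro a
        simp only [mul_ite, mul_zero]
        rw [Finset.sum_ite_eq' Finset.univ a (fun b => pottsP W m a b * W b a)]
        simp [hWdef]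
      rw [Finset.sum_congr rfl fun a _ => h1 a, ← Finset.sum_mul, htr m]
      ring
    · show (if x k = x (k + 1) then (∏ i : ZMod (m+1), W (x i) (x (i+1))) else 0)
        = (∏ j : Fin m, W ((E x) j.castSucc) ((E x) j.succ))
            * (if (E x) (Fin.last m) = (E x) 0 then W ((E x) (Fin.last m)) ((E x) 0) else 0)
      have hk : x k = (E x) (Fin.last m) := by rw [hEapp, hlastk]
      have hk1 : x (k + 1) = (E x) 0 := by rw [hEapp, h0k]
      rw [hk, hk1, hprod x, mul_ite, mul_zero]
  rw [hnum, hden]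
  simp only [Nat.add_sub_cancel]
end
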